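/- Granularity of variance: if f : {0,1}^n → {0,1} has certificate complexity at most k and Var(f) < 2^{-k} − 2^{-2k}, then f is constant (Var(f) = 0). -/

import Mathlib

open Finset

variable {ι : Type*} [Fintype ι] [DecidableEq ι]

/-- `x` with its `i`-th bit flipped. -/
def flipAt (x : ι → Bool) (i : ι) : ι → Bool := Function.update x i (!x i)

/-- `S` is a certificate for `f`'s value at `x`. -/
def IsCert (f : (ι → Bool) → Bool) (x : ι → Bool) (S : Finset ι) : Prop :=
  ∀ y : ι → Bool, (∀ i ∈ S, y i = x i) → f y = f x

/-- Certificate complexity of `f` at `x`: minimum size of a certificate. -/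
noncomputable def certAt (f : (ι → Bool) → Bool) (x : ι → Bool) : ℕ :=
  sInf {k | ∃ S : Finset ι, IsCert f x S ∧ S.card = k}

/-- Certificate complexity of `f`. -/
noncomputable def certC (f : (ι → Bool) → Bool) : ℕ :=
  sSup {k | ∃ x : ι → Bool, certAt f x = k}

/-- Influence of coordinate `i` on `f` (uniform distribution). -/
noncomputable def influence (f : (ι → Bool) → Bool) (i : ι) : ℝ :=
  ((univ.filter fun x : ι → Bool => f (flipAt x i) ≠ f x).card : ℝ) / 2 ^ Fintype.card ι

/-- Total influence of `f`. -/
noncomputable def totalInf (f : (ι → Bool) → Bool) : ℝ := ∑ i : ι, influence f i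

/-- `Pr_{x uniform}[f(x) = b]`. -/
noncomputable def probEq (f : (ι → Bool) → Bool) (b : Bool) : ℝ :=
  ((univ.filter fun x : ι → Bool => f x = b).card : ℝ) / 2 ^ Fintype.card ι

/-- Variance of `f`: `Pr[f = 0] * Pr[f = 1]`. -/
noncomputable def fvar (f : (ι → Bool) → Bool) : ℝ := probEq f false * probEq f true



lemma cert_univ (f : (ι → Bool) → Bool) (x : ι → Bool) : IsCert f x univ := by
  intro y hy
  have : y = x := funext fun i => hy i (mem_univ i)
  rw [this]

lemma certAt_le_certC (f : (ι → Bool) → Bool) (x : ι → Bool) : certAt f x ≤ certC f := by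
  apply le_csSup
  · refine ⟨Fintype.card ι, ?_⟩
    rintro n ⟨y, rfl⟩
    have h : certAt f y ≤ (univ : Finset ι).card :=
      Nat.sInf_le ⟨univ, cert_univ f y, rfl⟩
    simpa using h
  · exact ⟨x, rfl⟩

lemma exists_cert (f : (ι → Bool) → Bool) (x : ι → Bool) :
    ∃ S : Finset ι, IsCert f x S ∧ S.card = certAt f x := by
  have hne : {k | ∃ S : Finset ι, IsCert f x S ∧ S.card = k}.Nonempty :=
    ⟨(univ : Finset ι).card, univ, cert_univ f x, rfl⟩
  exact Nat.sInf_mem hne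

lemma subcube_card (x : ι → Bool) (S : Finset ι) :
    2 ^ (Fintype.card ι - S.card) ≤
      (univ.filter fun y : ι → Bool => ∀ i ∈ S, y i = x i).card := by
  classical
  have hcard : Fintype.card ({i : ι // i ∉ S} → Bool) = 2 ^ (Fintype.card ι - S.card) := by
    simp [Fintype.card_fun, Fintype.card_subtype_compl, Fintype.card_coe]
  have := Finset.card_le_card_of_injOn
    (f := fun (h : {i : ι // i ∉ S} → Bool) (i : ι) =>
      if hm : i ∈ S then x i else h ⟨i, hm⟩)
    (s := (univ : Finset ({i : ι // i ∉ S} → Bool)))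
    (t := univ.filter fun y : ι → Bool => ∀ i ∈ S, y i = x i)
    (by
      intro a _
      simp only [Finset.mem_coe, mem_filter, mem_univ, true_and]
      intro i hi
      simp [hi])
    (by
      intro a _ b _ hab
      funext ⟨i, hi⟩
      have := congrFun hab i
      simpa [hi] using this)
  simpa [hcard] using this

lemma prob_ge (f : (ι → Bool) → Bool) (k : ℕ) (hk : certC f ≤ k) (x : ι → Bool) :
    1 / 2 ^ k ≤ probEq f (f x) := by
  obtain ⟨S, hS, hcard⟩ := exists_cert f x
  have hSk : S.card ≤ k := hcard ▸ (certAt_le_certC f x).trans hk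
  have hsub : (univ.filter fun y : ι → Bool => ∀ i ∈ S, y i = x i) ⊆
      univ.filter fun y : ι → Bool => f y = f x := by
    intro y hy
    simp only [mem_filter, mem_univ, true_and] at hy ⊢
    exact hS y hy
  have h1 : 2 ^ (Fintype.card ι - S.card) ≤
      (univ.filter fun y : ι → Bool => f y = f x).card :=
    (subcube_card x S).trans (Finset.card_le_card hsub)
  have hSn : S.card ≤ Fintype.card ι := by
    simpa using Finset.card_le_card (Finset.subset_univ S)
  have h2 : 2 ^ Fintype.card ι ≤
      (univ.filter fun y : ι → Bool => f y = f x).card * 2 ^ k := by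
    calc 2 ^ Fintype.card ι = 2 ^ (Fintype.card ι - S.card) * 2 ^ S.card := by
          rw [← pow_add, Nat.sub_add_cancel hSn]
      _ ≤ (univ.filter fun y : ι → Bool => f y = f x).card * 2 ^ k :=
          Nat.mul_le_mul h1 (Nat.pow_le_pow_right (by norm_num) hSk)
  rw [probEq, div_le_div_iff₀ (by positivity) (by positivity)]
  calc (1 : ℝ) * 2 ^ Fintype.card ι = 2 ^ Fintype.card ι := one_mul _
    _ ≤ (univ.filter fun y : ι → Bool => f y = f x).card * 2 ^ k := by
        exact_mod_cast h2

theorem stmt7 {ι : Type*} [Fintype ι] [DecidableEq ι] (f : (ι → Bool) → Bool) (k : ℕ)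
    (hk : certC f ≤ k) (hvar : fvar f < 1 / 2 ^ k - 1 / 2 ^ (2 * k)) :
    fvar f = 0 ∧ ∀ x y : ι → Bool, f x = f y := by
  by_cases hc : ∀ x y : ι → Bool, f x = f y
  · refine ⟨?_, hc⟩
    obtain ⟨x0⟩ : Nonempty (ι → Bool) := inferInstance
    cases hfx : f x0 with
    | false =>
      have h : (univ.filter fun x : ι → Bool => f x = true) = ∅ := by
        apply Finset.filter_eq_empty_iff.mpr
        intro x _
        rw [hc x x0, hfx]; simp
      simp [fvar, probEq, h]
    | true =>
      have h : (univ.filter fun x : ι → Bool => f x = false) = ∅ := by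
        apply Finset.filter_eq_empty_iff.mpr
        intro x _
        rw [hc x x0, hfx]; simp
      simp [fvar, probEq, h]
  · exfalso
    push_neg at hc
    obtain ⟨x, y, hxy⟩ := hc
    have h0 : ∃ z, f z = false := by
      cases hx : f x
      · exact ⟨x, hx⟩
      · cases hy : f y
        · exact ⟨y, hy⟩
        · exact absurd (hx.trans hy.symm) hxy
    have h1 : ∃ z, f z = true := by
      cases hx : f x
      · cases hy : f y
        · exact absurd (hx.trans hy.symm) hxy
        · exact ⟨y, hy⟩
      · exact ⟨x, hx⟩
    obtain ⟨z0, hz0⟩ := h0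
    obtain ⟨z1, hz1⟩ := h1
    have pa0 : 1 / 2 ^ k ≤ probEq f false := by
      have := prob_ge f k hk z0; rwa [hz0] at this
    have pa1 : 1 / 2 ^ k ≤ probEq f true := by
      have := prob_ge f k hk z1; rwa [hz1] at this
    have hsum : probEq f false + probEq f true = 1 := by
      have hcount : (univ.filter fun x : ι → Bool => f x = false).card +
          (univ.filter fun x : ι → Bool => f x = true).card = 2 ^ Fintype.card ι := by
        have := Finset.card_filter_add_card_filter_not
          (s := (univ : Finset (ι → Bool))) (p := fun x => f x = false)
        simp only [Bool.not_eq_false] at this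
        rw [this]
        simp [Fintype.card_fun]
      rw [probEq, probEq, ← add_div, ← Nat.cast_add, hcount]
      field_simp
      norm_num
    have hsq : (1 : ℝ) / 2 ^ (2 * k) = (1 / 2 ^ k) * (1 / 2 ^ k) := by
      rw [two_mul, pow_add]; ring
    have hprod : 0 ≤ (probEq f false - 1 / 2 ^ k) * (probEq f true - 1 / 2 ^ k) :=
      mul_nonneg (by linarith) (by linarith)
    rw [fvar] at hvar
    nlinarith [hprod, hsum, hvar]
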